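/- For each d ≥ 1, every d-dimensional obstruction to purity has exactly d+2 vertices; that is, if K is a d-dimensional simplicial complex on more than d+2 vertices all of whose proper induced subcomplexes are pure, then K itself is pure. -/
import Mathlib


open Finset

variable {V : Type*} [DecidableEq V]

/-- A (finite abstract) simplicial complex: a finset of finsets closed under subsets. -/
def IsComplex (K : Finset (Finset V)) : Prop :=
  ∀ F ∈ K, ∀ G ⊆ F, G ∈ K

/-- The facets (maximal faces) of a complex. -/
def facets (K : Finset (Finset V)) : Finset (Finset V) := by
  classical exact K.filter (fun F => ∀ G ∈ K, F ⊆ G → F = G)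

/-- `L` is a shelling order of the facets of `K`: for each `i ≥ 2` (0-indexed `i ≥ 1`),
the intersection of the closed simplex on `F_i` with the union of the previous closed simplices
is pure of dimension `dim F_i - 1`: every face `G` of the intersection is contained in a face `H`
of the intersection with `H.card = F_i.card - 1`. -/
def IsShelling (K : Finset (Finset V)) (L : List (Finset V)) : Prop :=
  L.Nodup ∧ L.toFinset = facets K ∧
  ∀ i : Fin L.length, i.1 ≠ 0 → ∀ G ⊆ L.get i,
    (∃ j : Fin L.length, j < i ∧ G ⊆ L.get j) →
    ∃ H, G ⊆ H ∧ H ⊆ L.get i ∧ H.card + 1 = (L.get i).card ∧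
      ∃ j : Fin L.length, j < i ∧ H ⊆ L.get j

/-- A complex is shellable if it admits a shelling order of its facets. -/
def Shellable (K : Finset (Finset V)) : Prop := ∃ L, IsShelling K L

/-- The subcomplex of `K` induced by a vertex subset `U`. -/
def inducedSub (K : Finset (Finset V)) (U : Finset V) : Finset (Finset V) :=
  K.filter (fun F => F ⊆ U)

/-- The vertex set of a complex. -/
def verts (K : Finset (Finset V)) : Finset V := K.sup id

/-- The link of a vertex `v` in `K`. -/
def link (K : Finset (Finset V)) (v : V) : Finset (Finset V) :=
  K.filter (fun F => v ∉ F ∧ insert v F ∈ K)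

/-- A complex is pure if all of its facets have the same dimension. -/
def IsPure (K : Finset (Finset V)) : Prop :=
  ∀ F ∈ facets K, ∀ G ∈ facets K, F.card = G.card

lemma mem_facets {K : Finset (Finset V)} {F : Finset V} :
    F ∈ facets K ↔ F ∈ K ∧ ∀ G ∈ K, F ⊆ G → F = G := by
  classical
  simp [facets, Finset.mem_filter]

lemma face_subset_verts {K : Finset (Finset V)} {F : Finset V} (hF : F ∈ K) :
    F ⊆ verts K :=
  Finset.le_sup (f := id) hF

lemma exists_facet (K : Finset (Finset V)) {F : Finset V} (hF : F ∈ K) :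
    ∃ H ∈ facets K, F ⊆ H := by
  classical
  have hne : (K.filter (fun H => F ⊆ H)).Nonempty := ⟨F, by simp [hF]⟩
  obtain ⟨H, hH, hmax⟩ := Finset.exists_max_image _ Finset.card hne
  rw [Finset.mem_filter] at hH
  refine ⟨H, mem_facets.2 ⟨hH.1, ?_⟩, hH.2⟩
  intro G hG hHG
  exact Finset.eq_of_subset_of_card_le hHG
    (hmax G (Finset.mem_filter.2 ⟨hG, hH.2.trans hHG⟩))

lemma facet_induced {K : Finset (Finset V)} {U : Finset V} {F : Finset V}
    (hF : F ∈ facets K) (hFU : F ⊆ U) : F ∈ facets (inducedSub K U) := by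
  classical
  rw [mem_facets] at hF ⊢
  refine ⟨Finset.mem_filter.2 ⟨hF.1, hFU⟩, fun G hG hFG => ?_⟩
  exact hF.2 G (Finset.mem_filter.1 hG).1 hFG

/-- Every `d`-dimensional obstruction to purity has exactly `d+2` vertices: a `d`-dimensional
complex on more than `d+2` vertices all of whose proper induced subcomplexes are pure
is itself pure. -/
theorem stmt12 (d : ℕ) (hd : 1 ≤ d) (K : Finset (Finset V)) (hK : IsComplex K)
    (hdim : (∀ F ∈ K, F.card ≤ d + 1) ∧ ∃ F ∈ K, F.card = d + 1)
    (hcard : d + 2 < (verts K).card)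
    (hind : ∀ U ⊂ verts K, IsPure (inducedSub K U)) :
    IsPure K := by
  classical
  obtain ⟨hbound, F₀, hF₀K, hF₀card⟩ := hdim
  have hF₀facet : F₀ ∈ facets K := by
    refine mem_facets.2 ⟨hF₀K, fun G hG hsub => ?_⟩
    exact Finset.eq_of_subset_of_card_le hsub (hF₀card ▸ hbound G hG)
  -- Key lemma: two facets avoiding a common vertex have equal cardinality.
  have lemA : ∀ A ∈ facets K, ∀ B ∈ facets K, ∀ x ∈ verts K, x ∉ A → x ∉ B →
      B.card = A.card := by
    intro A hA B hB x hx hxA hxB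
    have hU : verts K \ {x} ⊂ verts K := by
      refine Finset.ssubset_iff_of_subset Finset.sdiff_subset |>.2 ⟨x, hx, by simp⟩
    have hpure := hind _ hU
    have hAK : A ∈ K := (mem_facets.1 hA).1
    have hBK : B ∈ K := (mem_facets.1 hB).1
    have hA' : A ∈ facets (inducedSub K (verts K \ {x})) :=
      facet_induced hA (by
        intro y hy
        exact Finset.mem_sdiff.2 ⟨face_subset_verts hAK hy,
          by simp; rintro rfl; exact hxA hy⟩)
    have hB' : B ∈ facets (inducedSub K (verts K \ {x})) :=
      facet_induced hB (by
        intro y hy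
        exact Finset.mem_sdiff.2 ⟨face_subset_verts hBK hy,
          by simp; rintro rfl; exact hxB hy⟩)
    exact hpure B hB' A hA'
  suffices h : ∀ G ∈ facets K, G.card = d + 1 by
    intro F hF G hG; rw [h F hF, h G hG]
  intro G hG
  by_contra hGcard
  have hGK : G ∈ K := (mem_facets.1 hG).1
  have hGlt : G.card < d + 1 := lt_of_le_of_ne (hbound G hGK) hGcard
  have hnsub : ¬ G ⊆ F₀ := by
    intro h
    exact hGcard (((mem_facets.1 hG).2 F₀ hF₀K h) ▸ hF₀card)
  obtain ⟨x, hxG, hxF₀⟩ := Finset.not_subset.1 hnsub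
  have hxV : x ∈ verts K := face_subset_verts hGK hxG
  set U := verts K \ {x} with hUdef
  have hUss : U ⊂ verts K :=
    Finset.ssubset_iff_of_subset Finset.sdiff_subset |>.2 ⟨x, hxV, by simp⟩
  have hGx : G \ {x} ∈ inducedSub K U := by
    refine Finset.mem_filter.2 ⟨hK G hGK _ Finset.sdiff_subset, ?_⟩
    intro y hy
    rw [Finset.mem_sdiff] at hy
    exact Finset.mem_sdiff.2 ⟨face_subset_verts hGK hy.1, hy.2⟩
  obtain ⟨H, hHfac, hGxH⟩ := exists_facet _ hGx
  have hHmem := Finset.mem_filter.1 (mem_facets.1 hHfac).1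
  have hHK : H ∈ K := hHmem.1
  have hxH : x ∉ H := fun h => by simpa using (Finset.mem_sdiff.1 (hHmem.2 h)).2
  have hF₀U : F₀ ∈ facets (inducedSub K U) :=
    facet_induced hF₀facet (by
      intro y hy
      exact Finset.mem_sdiff.2 ⟨face_subset_verts hF₀K hy,
        by simp; rintro rfl; exact hxF₀ hy⟩)
  have hHcard : H.card = d + 1 := by
    rw [hind U hUss H hHfac F₀ hF₀U, hF₀card]
  have hHfacK : H ∈ facets K := by
    refine mem_facets.2 ⟨hHK, fun G' hG' hsub => ?_⟩
    exact Finset.eq_of_subset_of_card_le hsub (hHcard ▸ hbound G' hG')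
  have hsubins : verts K ⊆ insert x H := by
    intro y hy
    by_contra hyn
    rw [Finset.mem_insert] at hyn
    push_neg at hyn
    have hyG : y ∉ G := by
      intro h
      exact hyn.2 (hGxH (Finset.mem_sdiff.2 ⟨h, by simp [hyn.1]⟩))
    have := lemA H hHfacK G hG y hy hyn.2 hyG
    omega
  have hle : (verts K).card ≤ d + 2 := by
    calc (verts K).card ≤ (insert x H).card := Finset.card_le_card hsubins
    _ ≤ H.card + 1 := Finset.card_insert_le _ _
    _ = d + 2 := by omega
  omega
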